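/- In HC_n, set R^Ψ_i := (c_i − c_{i+1}) T_i + (v−1) c_{i+1} for 1 ≤ i ≤ n−1. Let σ ∈ S_n with a reduced expression σ = s_{i_1}⋯s_{i_k}, and set R^Ψ_{σ̲} := R^Ψ_{i_1}⋯R^Ψ_{i_k}. Let I ⊆ {1,…,n} be a nonempty subset such that k + |I| is even. Then R^Ψ_{σ̲} C_I lies in [HC_n, HC_n]. (This is the statement, transported through the isomorphism HC_n ≅ sH_n ⊗ Cl_n of Wang, that an even element R_{σ̲} C_I of the spin Hecke–Clifford superalgebra with I nonempty lies in the commutator subspace.) -/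

import Mathlib

noncomputable section

/-- The ring `ℤ[1/2]`. -/
abbrev Zh : Type := Localization.Away (2 : ℤ)

/-- The ring `A = ℤ[1/2][v, v⁻¹]` of Laurent polynomials over `ℤ[1/2]`. -/
def Av : Type := LaurentPolynomial Zh

noncomputable instance : CommRing Av := inferInstanceAs (CommRing (LaurentPolynomial Zh))

/-- The indeterminate `v ∈ A`. -/
def vA : Av := (LaurentPolynomial.T 1 : LaurentPolynomial Zh)

/-- Generators of the Hecke–Clifford algebra: `T i` (0-based, for `T_{i+1}` of the paper,
`i = 0, …, n-2`) and `c j` (0-based, for `c_{j+1}`, `j = 0, …, n-1`). -/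
inductive HCgen (n : ℕ) : Type
  | T : Fin (n - 1) → HCgen n
  | c : Fin n → HCgen n

/-- For a `T`-index `i`, the `c`-index of the first strand that `T_i` involves. -/
def lo {n : ℕ} (i : Fin (n - 1)) : Fin n := ⟨i.1, by have := i.2; omega⟩

/-- For a `T`-index `i`, the `c`-index of the second strand that `T_i` involves. -/
def hi {n : ℕ} (i : Fin (n - 1)) : Fin n := ⟨i.1 + 1, by have := i.2; omega⟩

/-- The defining relations of the Hecke–Clifford algebra. -/
inductive HCrel (n : ℕ) : FreeAlgebra Av (HCgen n) → FreeAlgebra Av (HCgen n) → Prop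
  | quad (i : Fin (n - 1)) :
      HCrel n ((FreeAlgebra.ι Av (HCgen.T i) - algebraMap Av (FreeAlgebra Av (HCgen n)) vA) *
        (FreeAlgebra.ι Av (HCgen.T i) + 1)) 0
  | Tcomm (i j : Fin (n - 1)) (h : i.1 + 1 < j.1) :
      HCrel n (FreeAlgebra.ι Av (HCgen.T i) * FreeAlgebra.ι Av (HCgen.T j))
        (FreeAlgebra.ι Av (HCgen.T j) * FreeAlgebra.ι Av (HCgen.T i))
  | braid (i j : Fin (n - 1)) (h : i.1 + 1 = j.1) :
      HCrel n (FreeAlgebra.ι Av (HCgen.T i) * FreeAlgebra.ι Av (HCgen.T j) *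
          FreeAlgebra.ι Av (HCgen.T i))
        (FreeAlgebra.ι Av (HCgen.T j) * FreeAlgebra.ι Av (HCgen.T i) *
          FreeAlgebra.ι Av (HCgen.T j))
  | csq (i : Fin n) :
      HCrel n (FreeAlgebra.ι Av (HCgen.c i) * FreeAlgebra.ι Av (HCgen.c i)) 1
  | canti (i j : Fin n) (h : i ≠ j) :
      HCrel n (FreeAlgebra.ι Av (HCgen.c i) * FreeAlgebra.ι Av (HCgen.c j))
        (-(FreeAlgebra.ι Av (HCgen.c j) * FreeAlgebra.ι Av (HCgen.c i)))
  | Tccomm (i : Fin (n - 1)) (j : Fin n) (h1 : j ≠ lo i) (h2 : j ≠ hi i) :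
      HCrel n (FreeAlgebra.ι Av (HCgen.T i) * FreeAlgebra.ι Av (HCgen.c j))
        (FreeAlgebra.ι Av (HCgen.c j) * FreeAlgebra.ι Av (HCgen.T i))
  | Tc (i : Fin (n - 1)) :
      HCrel n (FreeAlgebra.ι Av (HCgen.T i) * FreeAlgebra.ι Av (HCgen.c (lo i)))
        (FreeAlgebra.ι Av (HCgen.c (hi i)) * FreeAlgebra.ι Av (HCgen.T i))

/-- The Hecke–Clifford algebra `HC_n` over `A`. -/
abbrev HC (n : ℕ) : Type := RingQuot (HCrel n)

/-- The generator `T_i` of `HC_n` (`0`-based index). -/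
def Tg {n : ℕ} (i : Fin (n - 1)) : HC n :=
  RingQuot.mkAlgHom Av (HCrel n) (FreeAlgebra.ι Av (HCgen.T i))

/-- The generator `c_j` of `HC_n` (`0`-based index). -/
def cg {n : ℕ} (j : Fin n) : HC n :=
  RingQuot.mkAlgHom Av (HCrel n) (FreeAlgebra.ι Av (HCgen.c j))

/-- `T_{i_1} ⋯ T_{i_k}` for a word `L = [i_1, …, i_k]`. -/
def Tw {n : ℕ} (L : List (Fin (n - 1))) : HC n := (L.map Tg).prod

/-- `C_I = c_{i_1} ⋯ c_{i_k}` for a subset `I = {i_1 < ⋯ < i_k}`. -/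
def Cset {n : ℕ} (I : Finset (Fin n)) : HC n := ((I.sort (· ≤ ·)).map cg).prod

/-- The `A`-submodule `[HC_n, HC_n]` spanned by all commutators. -/
def commSpan (n : ℕ) : Submodule Av (HC n) :=
  Submodule.span Av {x : HC n | ∃ a b : HC n, x = a * b - b * a}

/-- The simple transposition `s_i = (i+1, i+2)` (paper numbering) in `S_n`. -/
def sgen {n : ℕ} (i : Fin (n - 1)) : Equiv.Perm (Fin n) := Equiv.swap (lo i) (hi i)

/-- The product of the simple transpositions along a word. -/
def wordProd {n : ℕ} (L : List (Fin (n - 1))) : Equiv.Perm (Fin n) := (L.map sgen).prod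

/-- The Coxeter length of a permutation: the minimal length of a word in the simple
transpositions expressing it. -/
def plen {n : ℕ} (σ : Equiv.Perm (Fin n)) : ℕ :=
  sInf {k | ∃ L : List (Fin (n - 1)), wordProd L = σ ∧ L.length = k}

/-- `L` is a reduced expression of `σ`. -/
def IsReducedWord {n : ℕ} (σ : Equiv.Perm (Fin n)) (L : List (Fin (n - 1))) : Prop :=
  wordProd L = σ ∧ L.length = plen σ

/-- The canonical reduced word of the permutation `w_γ` attached to a composition `γ` of `n`:
the increasing list of all `0`-based `T`-indices `i ∈ {0, …, n-2}` such that `i+1` is not a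
partial sum of `γ`. -/
def compWord {n : ℕ} (γ : Composition n) : List (Fin (n - 1)) :=
  (List.finRange (n - 1)).filter (fun i => i.1 + 1 ∉ γ.blocks.scanl (· + ·) 0)

/-- The element `T_{w_γ}` of `HC_n` for a composition `γ` of `n`. -/
def Twγ {n : ℕ} (γ : Composition n) : HC n := Tw (compWord γ)

/-- The permutation `w_γ` attached to a composition `γ` of `n`. -/
def wγ {n : ℕ} (γ : Composition n) : Equiv.Perm (Fin n) := wordProd (compWord γ)

/-- A composition is a partition if its parts are weakly decreasing. -/
def IsPartitionC {n : ℕ} (γ : Composition n) : Prop := γ.blocks.Pairwise (· ≥ ·)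

/-- An odd partition: a partition all of whose parts are odd. -/
def IsOddPartitionC {n : ℕ} (γ : Composition n) : Prop :=
  IsPartitionC γ ∧ ∀ p ∈ γ.blocks, Odd p

instance {n : ℕ} (γ : Composition n) : Decidable (IsOddPartitionC γ) := by
  unfold IsOddPartitionC IsPartitionC
  infer_instance

/-- A trace function on `HC_n`: an `A`-linear map that is symmetric on products and vanishes
on the odd part, i.e. on all elements `T_σ C_I` with `|I|` odd (with `T_σ` given by any
reduced expression of `σ`). -/
def IsTraceFun {n : ℕ} (φ : HC n →ₗ[Av] Av) : Prop :=
  (∀ a b : HC n, φ (a * b) = φ (b * a)) ∧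
  ∀ L : List (Fin (n - 1)), IsReducedWord (wordProd L) L →
    ∀ I : Finset (Fin n), Odd I.card → φ (Tw L * Cset I) = 0

/-- The element `(v - 1)/2 ∈ A`. -/
def halfvm1 : Av := Ring.inverse (2 : Av) * (vA - 1)


/-- The element `R^Ψ_i = (c_i - c_{i+1}) T_i + (v-1) c_{i+1}` of `HC_n`. -/
def Rpsi {n : ℕ} (i : Fin (n - 1)) : HC n :=
  (cg (lo i) - cg (hi i)) * Tg i + (vA - 1) • cg (hi i)

section Lemmas
variable {n : ℕ}

lemma c_sq (j : Fin n) : cg j * cg j = (1 : HC n) := by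
  have := RingQuot.mkAlgHom_rel Av (HCrel.csq j)
  simpa [cg, map_mul, map_one] using this

lemma c_anti {i j : Fin n} (h : i ≠ j) : cg i * cg j = -(cg j * cg i) := by
  have := RingQuot.mkAlgHom_rel Av (HCrel.canti i j h)
  simpa [cg, map_mul, map_neg] using this

lemma Tc_lo (i : Fin (n - 1)) : Tg i * cg (lo i) = cg (hi i) * Tg i := by
  have := RingQuot.mkAlgHom_rel Av (HCrel.Tc i)
  simpa [cg, Tg, map_mul] using this

lemma Tc_other (i : Fin (n - 1)) {j : Fin n} (h1 : j ≠ lo i) (h2 : j ≠ hi i) :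
    Tg i * cg j = cg j * Tg i := by
  have := RingQuot.mkAlgHom_rel Av (HCrel.Tccomm i j h1 h2)
  simpa [cg, Tg, map_mul] using this

lemma Tg_quad (i : Fin (n - 1)) :
    Tg i * Tg i = vA • (1 : HC n) + vA • Tg i - Tg i := by
  have h := RingQuot.mkAlgHom_rel Av (HCrel.quad i)
  simp only [map_mul, map_sub, map_add, map_one, map_zero, AlgHom.commutes] at h
  rw [Algebra.algebraMap_eq_smul_one] at h
  have h' : Tg i * Tg i + Tg i - (vA • Tg i + vA • (1 : HC n)) = 0 := by
    have : (Tg i - vA • (1:HC n)) * (Tg i + 1) =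
        Tg i * Tg i + Tg i - (vA • Tg i + vA • (1:HC n)) := by
      simp [sub_mul, mul_add, smul_mul_assoc, mul_one, one_mul]
      abel
    rw [← this]; exact h
  have h2 := eq_sub_of_add_eq (sub_eq_zero.mp h')
  rw [h2]; abel

end Lemmas
section Lemmas2
variable {n : ℕ}

lemma Tc_hi (i : Fin (n - 1)) :
    Tg i * cg (hi i) = cg (lo i) * Tg i + (vA - 1) • (cg (hi i) - cg (lo i)) := by
  set t := Tg i with ht
  set a := cg (lo i) with ha
  set b := cg (hi i) with hb
  have h1 : t * a = b * t := Tc_lo i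
  have hq : t * t = vA • (1 : HC n) + vA • t - t := Tg_quad i
  have e1r : t * (a * t) = vA • b + vA • (t * a) - t * a := by
    rw [← mul_assoc, h1, mul_assoc, hq]
    simp only [mul_add, mul_sub, mul_smul_comm, mul_one]
  have hqx : ∀ x : HC n, t * (t * x) = vA • x + vA • (t * x) - t * x := fun x => by
    rw [← mul_assoc, hq]; simp only [add_mul, sub_mul, smul_mul_assoc, one_mul]
  have key : vA • (t * b) = vA • (a * t) + (vA * vA - vA) • b - (vA * vA - vA) • a := by
    have hb' : vA • b = t * (a * t) - vA • (t * a) + t * a := by rw [e1r]; abel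
    calc vA • (t * b) = t * (vA • b) := (mul_smul_comm _ _ _).symm
      _ = t * (t * (a * t)) - vA • (t * (t * a)) + t * (t * a) := by
          rw [hb', mul_add, mul_sub, mul_smul_comm]
      _ = _ := by rw [hqx (a * t), hqx a, e1r]; module
  have hu : IsUnit (algebraMap Av (HC n) vA) :=
    IsUnit.map _ (show IsUnit vA from LaurentPolynomial.isUnit_T 1)
  refine hu.mul_left_cancel ?_
  rw [← Algebra.smul_def, ← Algebra.smul_def, key]
  module

lemma R_anti (i : Fin (n - 1)) (j : Fin n) : Rpsi i * cg j = -(cg j * Rpsi i) := by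
  set t := Tg i with ht
  set a := cg (lo i) with ha
  set b := cg (hi i) with hb
  have hab : (lo i : Fin n) ≠ hi i := by simp [lo, hi, Fin.ext_iff]
  have hba : b * a = -(a * b) := c_anti hab.symm
  have haax : ∀ x : HC n, a * (a * x) = x := fun x => by
    rw [← mul_assoc, c_sq, one_mul]
  have hbbx : ∀ x : HC n, b * (b * x) = x := fun x => by
    rw [← mul_assoc, c_sq, one_mul]
  by_cases hja : j = lo i
  · subst hja
    have h1 : t * a = b * t := Tc_lo i
    simp only [Rpsi, ← ha, ← hb, ← ht, sub_mul, add_mul, mul_sub, mul_add,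
      smul_mul_assoc, mul_smul_comm, mul_assoc, h1, hbbx, haax, hba]
    module
  · by_cases hjb : j = hi i
    · subst hjb
      have h2 : t * b = a * t + (vA - 1) • (b - a) := Tc_hi i
      have hbb : b * b = (1 : HC n) := c_sq _
      have haa : a * a = (1 : HC n) := c_sq _
      simp only [Rpsi, ← ha, ← hb, ← ht, sub_mul, add_mul, mul_sub, mul_add,
        smul_mul_assoc, mul_smul_comm, mul_assoc, h2, hbbx, haax, hba, hbb, haa, smul_sub]
      module
    · have hc : t * cg j = cg j * t := Tc_other i hja hjb
      have hja' : lo i ≠ j := fun h => hja h.symm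
      have hjb' : hi i ≠ j := fun h => hjb h.symm
      have hacx : ∀ x : HC n, a * (cg j * x) = -(cg j * (a * x)) := fun x => by
        rw [← mul_assoc, c_anti hja']
        exact (neg_mul (cg j * cg (lo i)) x).trans
          (congrArg Neg.neg (mul_assoc (cg j) (cg (lo i)) x))
      have hbcx : ∀ x : HC n, b * (cg j * x) = -(cg j * (b * x)) := fun x => by
        rw [← mul_assoc, c_anti hjb']
        exact (neg_mul (cg j * cg (hi i)) x).trans
          (congrArg Neg.neg (mul_assoc (cg j) (cg (hi i)) x))
      have hbc : b * cg j = -(cg j * b) := c_anti hjb'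
      simp only [Rpsi, ← ha, ← hb, ← ht, sub_mul, add_mul, mul_sub, mul_add,
        smul_mul_assoc, mul_smul_comm, mul_assoc, hc, hacx, hbcx, hbc, mul_neg, neg_mul]
      module

end Lemmas2
section Lemmas3
variable {n : ℕ}

lemma neg_mul_assoc (a b c : HC n) : (-(a * b)) * c = -(a * (b * c)) :=
  (neg_mul (a * b) c).trans (congrArg Neg.neg (mul_assoc a b c))

lemma c_prod_anti (j : Fin n) : ∀ (l : List (Fin n)), j ∉ l →
    cg j * (l.map cg).prod = ((-1 : ℤ) ^ l.length) • ((l.map cg).prod * cg j)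
  | [], _ => by simp
  | i :: l, hj => by
    have hij : j ≠ i := by rintro rfl; simp at hj
    have hjl : j ∉ l := fun h => hj (List.mem_cons_of_mem _ h)
    simp only [List.map_cons, List.prod_cons, List.length_cons]
    calc cg j * (cg i * (l.map cg).prod)
        = (cg j * cg i) * (l.map cg).prod := (mul_assoc _ _ _).symm
      _ = (-(cg i * cg j)) * (l.map cg).prod := by rw [c_anti hij]
      _ = -(cg i * (cg j * (l.map cg).prod)) := neg_mul_assoc _ _ _
      _ = -(cg i * (((-1 : ℤ) ^ l.length) • ((l.map cg).prod * cg j))) := by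
            rw [c_prod_anti j l hjl]
      _ = ((-1 : ℤ) ^ (l.length + 1)) • (cg i * (l.map cg).prod * cg j) := by
            rw [mul_smul_comm, mul_assoc]; module

lemma c_prod_anti' (j : Fin n) (l : List (Fin n)) (hj : j ∉ l) :
    (l.map cg).prod * cg j = ((-1 : ℤ) ^ l.length) • (cg j * (l.map cg).prod) := by
  have h := c_prod_anti j l hj
  have : ((-1 : ℤ) ^ l.length) • (cg j * (l.map cg).prod) = (l.map cg).prod * cg j := by
    rw [h, smul_smul, ← pow_add, Even.neg_one_pow ⟨l.length, rfl⟩, one_smul]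
  exact this.symm

lemma R_prod_anti (j : Fin n) : ∀ (L : List (Fin (n - 1))),
    cg j * (L.map Rpsi).prod = ((-1 : ℤ) ^ L.length) • ((L.map Rpsi).prod * cg j)
  | [] => by simp
  | i :: L => by
    have h1 : cg j * Rpsi i = -(Rpsi i * cg j) := by
      have h := (R_anti i j).symm
      exact neg_eq_iff_eq_neg.mp h
    simp only [List.map_cons, List.prod_cons, List.length_cons]
    calc cg j * (Rpsi i * (L.map Rpsi).prod)
        = (cg j * Rpsi i) * (L.map Rpsi).prod := (mul_assoc _ _ _).symm
      _ = (-(Rpsi i * cg j)) * (L.map Rpsi).prod := by rw [h1]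
      _ = -(Rpsi i * (cg j * (L.map Rpsi).prod)) := neg_mul_assoc _ _ _
      _ = -(Rpsi i * (((-1 : ℤ) ^ L.length) • ((L.map Rpsi).prod * cg j))) := by
            rw [R_prod_anti j L]
      _ = ((-1 : ℤ) ^ (L.length + 1)) • (Rpsi i * (L.map Rpsi).prod * cg j) := by
            rw [mul_smul_comm, mul_assoc]; module

lemma cset_conj {j : Fin n} {I : Finset (Fin n)} (hj : j ∈ I) :
    cg j * Cset I * cg j = ((-1 : ℤ) ^ (I.card - 1)) • Cset I := by
  have hl : j ∈ I.sort (· ≤ ·) := (Finset.mem_sort _).mpr hj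
  obtain ⟨P, Q, hPQ⟩ := List.append_of_mem hl
  have hnd : (I.sort (· ≤ ·)).Nodup := I.sort_nodup _
  rw [hPQ] at hnd
  have hjP : j ∉ P := by
    simp only [List.nodup_append, List.nodup_cons, List.disjoint_cons_right] at hnd
    tauto
  have hjQ : j ∉ Q := by
    simp only [List.nodup_append, List.nodup_cons, List.disjoint_cons_right] at hnd
    tauto
  have hlen : P.length + Q.length = I.card - 1 := by
    have h := Finset.length_sort (α := Fin n) (· ≤ ·) (s := I)
    rw [hPQ] at h
    simp only [List.length_append, List.length_cons] at h
    omega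
  have hccx : ∀ x : HC n, cg j * (cg j * x) = x := fun x => by
    rw [← mul_assoc, c_sq, one_mul]
  unfold Cset
  rw [hPQ]
  simp only [List.map_append, List.map_cons, List.prod_append, List.prod_cons]
  calc cg j * ((P.map cg).prod * (cg j * (Q.map cg).prod)) * cg j
      = ((cg j * (P.map cg).prod) * (cg j * (Q.map cg).prod)) * cg j := by
        rw [← mul_assoc (cg j) (P.map cg).prod _]
    _ = ((-1 : ℤ) ^ P.length) • ((((P.map cg).prod * cg j) * (cg j * (Q.map cg).prod)) * cg j) := by
        rw [c_prod_anti j P hjP, smul_mul_assoc, smul_mul_assoc]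
    _ = ((-1 : ℤ) ^ P.length) • (((P.map cg).prod * (Q.map cg).prod) * cg j) := by
        rw [mul_assoc (P.map cg).prod (cg j) _, hccx]
    _ = ((-1 : ℤ) ^ P.length) • ((P.map cg).prod * ((Q.map cg).prod * cg j)) := by
        rw [mul_assoc]
    _ = ((-1 : ℤ) ^ P.length) • ((P.map cg).prod * (((-1 : ℤ) ^ Q.length) • (cg j * (Q.map cg).prod))) := by
        rw [c_prod_anti' j Q hjQ]
    _ = ((-1 : ℤ) ^ (I.card - 1)) • ((P.map cg).prod * (cg j * (Q.map cg).prod)) := by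
        rw [mul_smul_comm, smul_smul, ← pow_add, hlen]

end Lemmas3
/-- For a reduced expression `σ = s_{i_1} ⋯ s_{i_k}` and a nonempty
`I ⊆ [n]` with `k + |I|` even, the element `R^Ψ_{i_1} ⋯ R^Ψ_{i_k} C_I` lies in
`[HC_n, HC_n]`. -/
theorem statement_13 (n : ℕ) (hn : 1 ≤ n) (σ : Equiv.Perm (Fin n))
    (L : List (Fin (n - 1))) (hL : IsReducedWord σ L) (I : Finset (Fin n))
    (hne : I.Nonempty) (hpar : Even (L.length + I.card)) :
    (L.map Rpsi).prod * Cset I ∈ commSpan n := by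
  obtain ⟨j, hj⟩ := hne
  have hcard : 1 ≤ I.card := Finset.card_pos.mpr ⟨j, hj⟩
  set R := (L.map Rpsi).prod with hR
  set x := R * Cset I with hx
  -- conjugation by `cg j` negates `x`
  have h1 : cg j * x = ((-1 : ℤ) ^ L.length) • (R * (cg j * Cset I)) := by
    rw [hx, ← mul_assoc, hR, R_prod_anti j L, smul_mul_assoc, mul_assoc]
  have hconj : cg j * x * cg j = -x := by
    calc cg j * x * cg j
        = ((-1 : ℤ) ^ L.length) • (R * (cg j * Cset I) * cg j) := by
          rw [h1, smul_mul_assoc]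
      _ = ((-1 : ℤ) ^ L.length) • (R * (cg j * Cset I * cg j)) := by
          rw [mul_assoc R _ (cg j)]
      _ = ((-1 : ℤ) ^ L.length) • (R * (((-1 : ℤ) ^ (I.card - 1)) • Cset I)) := by
          rw [cset_conj hj]
      _ = ((-1 : ℤ) ^ (L.length + (I.card - 1))) • x := by
          rw [mul_smul_comm, smul_smul, ← pow_add, hx]
      _ = -x := by
          have hodd : Odd (L.length + (I.card - 1)) := by
            rw [Nat.odd_iff]; rw [Nat.even_iff] at hpar; omega
          rw [Odd.neg_one_pow hodd]
          module
  -- the commutator `(cg j * x) * cg j - cg j * (cg j * x)`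
  have hmem : (cg j * x) * cg j - cg j * (cg j * x) ∈ commSpan n :=
    Submodule.subset_span ⟨cg j * x, cg j, rfl⟩
  have hx2 : cg j * (cg j * x) = x := by rw [← mul_assoc, c_sq, one_mul]
  rw [hx2, hconj] at hmem
  -- hmem : -x - x ∈ commSpan n
  have hmem' : x + x ∈ commSpan n := by
    have h := (commSpan n).neg_mem hmem
    have he : -(-x - x) = x + x := by module
    rwa [he] at h
  -- divide by 2
  have h2z : IsUnit (2 : Zh) := by
    have := IsLocalization.Away.algebraMap_isUnit (S := Zh) (2 : ℤ)
    simpa using this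
  have h2 : IsUnit (2 : Av) := by
    have h := h2z.map (algebraMap Zh (LaurentPolynomial Zh))
    have : ((algebraMap Zh (LaurentPolynomial Zh)) (2 : Zh)) = (2 : LaurentPolynomial Zh) := by
      exact map_ofNat (algebraMap Zh (LaurentPolynomial Zh)) 2
    rw [this] at h
    exact h
  have hkey : Ring.inverse (2 : Av) • (x + x) = x := by
    rw [← two_smul Av x, smul_smul, Ring.inverse_mul_cancel _ h2, one_smul]
  rw [← hkey]
  exact Submodule.smul_mem _ _ hmem'

end
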